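/- For every n ≥ 2 there exists a polynomial map f : ℝ^n → ℝ^n such that f(B̄_n) equals the solid cylinder C_n := {x ∈ ℝ^n : x₁² + ⋯ + x_{n−1}² ≤ 1 and |xₙ| ≤ 1}. -/

import Mathlib

set_option maxHeartbeats 1000000


/-- A map between Euclidean spaces is a *polynomial map* if each of its components
is given by the evaluation of a real multivariate polynomial. -/
def IsPolynomialMap {σ τ : Type} (f : EuclideanSpace ℝ σ → EuclideanSpace ℝ τ) : Prop :=
  ∃ p : τ → MvPolynomial σ ℝ, ∀ x i, f x i = MvPolynomial.eval (fun j => x j) (p i)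

/-- Key inequality: `u (2 - (32/27) u)² ≤ 1` for `u ∈ [0,1]`. -/
lemma aux_g_le_one {u : ℝ} (h0 : 0 ≤ u) (h1 : u ≤ 1) : u * (2 - 32/27 * u)^2 ≤ 1 := by
  nlinarith [mul_nonneg (sq_nonneg (16*u - 9)) (by linarith : (0:ℝ) ≤ 9/4 - u)]

/-- Chebyshev bound: `|4t³ - 3t| ≤ 1` for `t² ≤ 1`. -/
lemma aux_cheb {t : ℝ} (h : t^2 ≤ 1) : (4*t^3 - 3*t)^2 ≤ 1 := by
  nlinarith [mul_nonneg (by linarith : (0:ℝ) ≤ 1 - t^2) (sq_nonneg (4*t^2 - 1))]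

lemma aux_sum_ite (m : ℕ) (g : Fin (m+1) → ℝ) :
    ∑ i : Fin (m+1), (if (i:ℕ) < m then g i else 0) = ∑ i : Fin m, g i.castSucc := by
  rw [Fin.sum_univ_castSucc]
  simp [Fin.is_lt]

lemma aux_norm_sq {k : ℕ} (x : EuclideanSpace ℝ (Fin k)) :
    x ∈ Metric.closedBall (0 : EuclideanSpace ℝ (Fin k)) 1 ↔ ∑ i, (x i)^2 ≤ 1 := by
  rw [Metric.mem_closedBall, dist_zero_right, EuclideanSpace.norm_eq]
  have hxx : ∑ i, ‖x i‖^2 = ∑ i, (x i)^2 := by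
    simp [Real.norm_eq_abs, sq_abs]
  rw [hxx]
  constructor
  · intro h
    have hnn : (0:ℝ) ≤ ∑ i, (x i)^2 := by positivity
    nlinarith [Real.sq_sqrt hnn, Real.sqrt_nonneg (∑ i, (x i)^2)]
  · intro h
    calc Real.sqrt (∑ i, (x i)^2) ≤ Real.sqrt 1 := Real.sqrt_le_sqrt h
      _ = 1 := Real.sqrt_one

/-- The solid cylinder `Cₙ := {x : x₁² + ⋯ + x_{n-1}² ≤ 1, |xₙ| ≤ 1}` is the image of
the closed unit ball `B̄ₙ` under a polynomial map `ℝⁿ → ℝⁿ`. -/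
theorem cylinder_is_poly_image_ball (n : ℕ) (hn : 2 ≤ n) :
    ∃ f : EuclideanSpace ℝ (Fin n) → EuclideanSpace ℝ (Fin n),
      IsPolynomialMap f ∧
      f '' Metric.closedBall 0 1 =
        {x : EuclideanSpace ℝ (Fin n) |
          (∑ i : Fin n, if (i : ℕ) < n - 1 then (x i) ^ 2 else 0) ≤ 1 ∧
          |x ⟨n - 1, by omega⟩| ≤ 1} := by
  obtain ⟨m, rfl⟩ : ∃ m, n = m + 1 := ⟨n - 1, by omega⟩
  simp only [Nat.add_sub_cancel]
  set S : EuclideanSpace ℝ (Fin (m+1)) → ℝ :=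
    fun x => ∑ j : Fin (m+1), if (j:ℕ) < m then (x j)^2 else 0 with hS
  refine ⟨fun x => WithLp.toLp 2 (fun i => if (i:ℕ) < m then x i * (2 - 32/27 * S x)
      else 4 * (x i)^3 - 3 * (x i)), ?_, ?_⟩
  · -- polynomiality
    refine ⟨fun i => if (i:ℕ) < m then
        MvPolynomial.X i * (MvPolynomial.C 2 - MvPolynomial.C (32/27) *
          ∑ j : Fin (m+1), if (j:ℕ) < m then (MvPolynomial.X j)^2 else 0)
      else MvPolynomial.C 4 * (MvPolynomial.X i)^3 - MvPolynomial.C 3 * MvPolynomial.X i,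
      fun x i => ?_⟩
    by_cases h : (i:ℕ) < m <;>
      simp [h, hS, map_sum, apply_ite (MvPolynomial.eval fun j => x j)]
  · ext y
    simp only [Set.mem_image, Set.mem_setOf_eq]
    constructor
    · -- forward inclusion
      rintro ⟨x, hx, rfl⟩
      rw [aux_norm_sq] at hx
      have hu0 : 0 ≤ S x := Finset.sum_nonneg fun i _ => by positivity
      have hu1 : S x ≤ 1 := by
        refine le_trans (Finset.sum_le_sum fun i _ => ?_) hx
        split
        · exact le_refl _
        · positivity
      constructor
      · refine le_trans (le_of_eq ?_) (aux_g_le_one hu0 hu1)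
        have hmul : S x * (2 - 32/27 * S x)^2
            = ∑ i : Fin (m+1), (if (i:ℕ) < m then (x i)^2 else 0) * (2 - 32/27 * S x)^2 := by
          rw [hS, Finset.sum_mul]
        rw [hmul]
        refine Finset.sum_congr rfl fun i _ => ?_
        by_cases h : (i:ℕ) < m
        · simp only [h, if_true]; ring
        · simp [h]
      · have hne : ¬ (((⟨m + 1 - 1, by omega⟩ : Fin (m+1)) : ℕ) < m) := by simp
        rw [← sq_le_one_iff_abs_le_one]
        simp only [if_neg hne, lt_self_iff_false, if_false]
        refine aux_cheb ?_
        refine le_trans (Finset.single_le_sum (f := fun i => (x i)^2)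
          (fun i _ => by positivity) (Finset.mem_univ _)) hx
    · -- backward inclusion
      rintro ⟨hy1, hy2⟩
      set ρ2 : ℝ := ∑ i : Fin (m+1), if (i:ℕ) < m then (y i)^2 else 0 with hρ2
      have hρ2_0 : 0 ≤ ρ2 := Finset.sum_nonneg fun i _ => by positivity
      set ρ : ℝ := Real.sqrt ρ2 with hρ
      have hρ0 : 0 ≤ ρ := Real.sqrt_nonneg _
      have hρ1 : ρ ≤ 1 := by
        rw [hρ, show (1:ℝ) = Real.sqrt 1 by simp]
        exact Real.sqrt_le_sqrt hy1
      have hρsq : ρ^2 = ρ2 := Real.sq_sqrt hρ2_0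
      -- IVT for r
      have hGc : Continuous (fun r : ℝ => 2*r - 32/27*r^3) := by continuity
      have hmem : ρ ∈ Set.Icc ((fun r : ℝ => 2*r - 32/27*r^3) 0)
          ((fun r : ℝ => 2*r - 32/27*r^3) (3/4)) := by
        norm_num
        exact ⟨hρ0, hρ1⟩
      obtain ⟨r, hrIcc, hGr'⟩ := intermediate_value_Icc (by norm_num : (0:ℝ) ≤ 3/4)
        hGc.continuousOn hmem
      obtain ⟨hr0, hr34⟩ := hrIcc
      have hGr : 2*r - 32/27*r^3 = ρ := hGr'
      -- IVT for t
      have hTc : Continuous (fun t : ℝ => 4*t^3 - 3*t) := by continuity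
      have hmem' : y ⟨m + 1 - 1, by omega⟩ ∈
          Set.Icc ((fun t : ℝ => 4*t^3 - 3*t) (1/2)) ((fun t : ℝ => 4*t^3 - 3*t) (-1/2)) := by
        norm_num
        exact abs_le.mp hy2
      obtain ⟨t, htIcc, hTt'⟩ := intermediate_value_Icc' (by norm_num : (-1/2:ℝ) ≤ 1/2)
        hTc.continuousOn hmem'
      obtain ⟨ht1, ht2⟩ := htIcc
      have hTt : 4*t^3 - 3*t = y ⟨m + 1 - 1, by omega⟩ := hTt'
      -- the preimage point
      set c : ℝ := if ρ = 0 then 0 else r / ρ with hc_def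
      have hc : c * ρ = r := by
        by_cases h : ρ = 0
        · simp only [hc_def, if_pos h, zero_mul]
          have hr2 : r^2 ≤ 9/16 := by nlinarith
          have hρz : (2*r - 32/27*r^3 : ℝ) = 0 := by rw [hGr, h]
          nlinarith [mul_le_mul_of_nonneg_left hr2 hr0]
        · simp only [hc_def, if_neg h]
          exact div_mul_cancel₀ r h
      set x : EuclideanSpace ℝ (Fin (m+1)) :=
        WithLp.toLp 2 (fun i => if (i:ℕ) < m then c * y i else t) with hx_def
      have hxi : ∀ i : Fin (m+1), (i:ℕ) < m → x i = c * y i := by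
        intro i h; simp only [hx_def, PiLp.toLp_apply, if_pos h]
      have hxi' : ∀ i : Fin (m+1), ¬ (i:ℕ) < m → x i = t := by
        intro i h; simp only [hx_def, PiLp.toLp_apply, if_neg h]
      have hSx : S x = r^2 := by
        have h1 : S x = c^2 * ρ2 := by
          simp only [hS, hρ2, Finset.mul_sum]
          refine Finset.sum_congr rfl fun i _ => ?_
          by_cases h : (i:ℕ) < m
          · rw [hxi i h]; simp only [if_pos h]; ring
          · simp [h]
        rw [h1, ← hρsq, ← mul_pow, hc]
      refine ⟨x, ?_, ?_⟩
      · rw [aux_norm_sq]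
        have hxlast : x (Fin.last m) = t := hxi' _ (by simp)
        have hsplit : ∑ i : Fin (m+1), (x i)^2
            = S x + (x (Fin.last m))^2 := by
          rw [Fin.sum_univ_castSucc (f := fun i => (x i)^2)]
          congr 1
          exact (aux_sum_ite m fun i => (x i)^2).symm
        rw [hsplit, hSx, hxlast]
        nlinarith
      · ext i
        by_cases h : (i:ℕ) < m
        · simp only [PiLp.toLp_apply, if_pos h, hSx, hxi i h]
          by_cases hz : ρ = 0
          · have hr : r = 0 := by rw [← hc, hz, mul_zero]
            have hz2 : ρ2 = 0 := by rw [← hρsq, hz]; ring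
            have hyi : y i = 0 := by
              have hsum0 : ∑ j : Fin (m+1), (if (j:ℕ) < m then (y j)^2 else 0) = 0 := by
                rw [← hρ2]; exact hz2
              have hall := (Finset.sum_eq_zero_iff_of_nonneg
                (s := Finset.univ)
                (f := fun j : Fin (m+1) => if (j:ℕ) < m then (y j)^2 else 0)
                (fun j _ => (by positivity : (0:ℝ) ≤ if (j:ℕ) < m then (y j)^2 else 0))).mp
                hsum0
              have hthis := hall i (Finset.mem_univ i)
              rw [if_pos h] at hthis
              exact pow_eq_zero_iff (n := 2) (by norm_num) |>.mp hthis
            simp only [hc_def, if_pos hz, hyi]; ring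
          · have hcne : c = r / ρ := by simp only [hc_def, if_neg hz]
            calc c * y i * (2 - 32/27 * r^2)
                = y i * ((2*r - 32/27*r^3) / ρ) := by rw [hcne]; ring
              _ = y i * (ρ / ρ) := by rw [hGr]
              _ = y i := by rw [div_self hz, mul_one]
        · simp only [PiLp.toLp_apply, if_neg h, hxi' i h]
          have hi : i = (⟨m + 1 - 1, by omega⟩ : Fin (m+1)) := by
            have hlt := i.isLt
            refine Fin.ext ?_
            show (i : ℕ) = m + 1 - 1
            omega
          rw [hi]
          exact hTt
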